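/- Let G be a group, N ⊴ G a normal subgroup with G/N abelian, and suppose G is generated by N together with elements s₂, …, s_n whose images in G/N are a basis of a free abelian group with presentation ⟨t₂,…,t_n | [t_i,t_j]⟩. If φ : G → {±1} is a homomorphism-like sign function trivial on N, then any element of ⟨s₂,…,s_n⟩ ∩ N lying in the kernel of the quotient map is a product of conjugates of commutators [s_i^{±1}, s_j^{±1}]; consequently, if all commutators [s_i, s_j] lie in a normal subgroup A ≤ N, then ⟨s₂,…,s_n⟩ ∩ N ≤ A·[N,N]. Concretely: in FSym(X) ⋊ ℤ^{n-1} form, if all [g_i^{c_i}, g_j^{c_j}] are even permutations, then every finitary permutation in ⟨g_2^{c_2},…,g_n^{c_n}⟩ is even. -/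

import Mathlib

/-- The group of finitary permutations of `X`: those with finite support. -/
def FSym (X : Type*) : Subgroup (Equiv.Perm X) where
  carrier := {g | {x | g x ≠ x}.Finite}
  one_mem' := by simp
  mul_mem' := by
    intro a b ha hb
    refine (Set.Finite.union ha hb).subset fun x hx => ?_
    simp only [Set.mem_setOf_eq, Set.mem_union, Equiv.Perm.mul_apply] at hx ⊢
    by_cases h : b x = x
    · left; rwa [h] at hx
    · right; exact h
  inv_mem' := by
    intro a ha
    refine ha.subset fun x hx => ?_
    simp only [Set.mem_setOf_eq] at hx ⊢
    intro h
    exact hx (Equiv.Perm.inv_eq_iff_eq.mpr h.symm)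

/-- A permutation is even (finitary) if it is a product of an even number of transpositions. -/
def IsEvenPerm {X : Type*} [DecidableEq X] (g : Equiv.Perm X) : Prop :=
  ∃ l : List (Equiv.Perm X), (∀ τ ∈ l, τ.IsSwap) ∧ Even l.length ∧ g = l.prod

/-- A permutation is odd (finitary) if it is a product of an odd number of transpositions. -/
def IsOddPerm {X : Type*} [DecidableEq X] (g : Equiv.Perm X) : Prop :=
  ∃ l : List (Equiv.Perm X), (∀ τ ∈ l, τ.IsSwap) ∧ Odd l.length ∧ g = l.prod

/-- `Alt(X)`: the group of even finitary permutations of `X`. -/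
def AltGroup (X : Type*) [DecidableEq X] : Subgroup (Equiv.Perm X) where
  carrier := {g | IsEvenPerm g}
  one_mem' := ⟨[], by simp, by simp, by simp⟩
  mul_mem' := by
    rintro a b ⟨l₁, hs₁, he₁, hp₁⟩ ⟨l₂, hs₂, he₂, hp₂⟩
    refine ⟨l₁ ++ l₂, ?_, by simpa using he₁.add he₂, by rw [hp₁, hp₂, List.prod_append]⟩
    intro τ hτ
    rcases List.mem_append.mp hτ with h | h
    exacts [hs₁ τ h, hs₂ τ h]
  inv_mem' := by
    rintro a ⟨l, hs, he, hp⟩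
    refine ⟨(l.map fun x => x⁻¹).reverse, ?_, by simpa using he, ?_⟩
    · intro τ hτ
      simp only [List.mem_reverse, List.mem_map] at hτ
      obtain ⟨σ, hσ, rfl⟩ := hτ
      obtain ⟨x, y, hxy, rfl⟩ := hs σ hσ
      exact ⟨x, y, hxy, by simp⟩
    · rw [hp, List.prod_inv_reverse]


/-- The generator `g_k` (for `k ≠ 0`) of Houghton's group `H_n`, acting on `Fin n × ℕ`
(rays indexed `0, …, n-1`, ray `0` playing the role of ray `1` in the paper, and
points on each ray indexed from `0`): it translates ray `0` up by one, translates
ray `k` down by one, and sends the bottom point of ray `k` to the bottom point of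
ray `0`. -/
def houghtonGen (n : ℕ) [NeZero n] (k : Fin n) (hk : k ≠ 0) : Equiv.Perm (Fin n × ℕ) where
  toFun p :=
    if p.1 = 0 then ((0 : Fin n), p.2 + 1)
    else if p.1 = k then (if p.2 = 0 then ((0 : Fin n), 0) else (k, p.2 - 1))
    else p
  invFun p :=
    if p.1 = 0 then (if p.2 = 0 then (k, 0) else ((0 : Fin n), p.2 - 1))
    else if p.1 = k then (k, p.2 + 1)
    else p
  left_inv := by
    rintro ⟨i, m⟩
    by_cases h0 : i = 0
    · subst h0; simp
    · by_cases hik : i = k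
      · subst hik
        rcases m with _ | m
        · simp [hk]
        · simp [hk]
      · simp [h0, hik]
  right_inv := by
    rintro ⟨i, m⟩
    by_cases h0 : i = 0
    · subst h0
      rcases m with _ | m
      · simp [hk]
      · simp
    · by_cases hik : i = k
      · subst hik; simp [hk]
      · simp [h0, hik]
theorem altGroup_normal (X : Type*) [DecidableEq X] : (AltGroup X).Normal := by
  constructor
  rintro a ⟨l, hs, he, hp⟩ g
  refine ⟨l.map fun τ => g * τ * g⁻¹, ?_, by simpa using he, ?_⟩
  · intro τ hτ
    simp only [List.mem_map] at hτ
    obtain ⟨σ, hσ, rfl⟩ := hτ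
    obtain ⟨x, y, hxy, rfl⟩ := hs σ hσ
    exact ⟨g x, g y, fun hh => hxy (g.injective hh), (Equiv.swap_apply_apply g x y).symm⟩
  · rw [hp]
    clear hp hs he
    induction l with
    | nil => simp
    | cons b l ih =>
      simp only [List.prod_cons, List.map_cons]
      rw [← ih]
      group

theorem hg_apply_other {n : ℕ} [NeZero n] {j : Fin n} (hj : j ≠ 0) {i : Fin n} (hi0 : i ≠ 0)
    (hij : i ≠ j) (m : ℕ) : houghtonGen n j hj (i, m) = (i, m) := by
  simp [houghtonGen, Equiv.coe_fn_mk, hi0, hij]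

theorem hg_apply_self {n : ℕ} [NeZero n] {j : Fin n} (hj : j ≠ 0) (m : ℕ) :
    houghtonGen n j hj (j, m + 1) = (j, m) := by
  simp [houghtonGen, Equiv.coe_fn_mk, hj]

theorem hg_pow_other {n : ℕ} [NeZero n] {j : Fin n} (hj : j ≠ 0) {i : Fin n} (hi0 : i ≠ 0)
    (hij : i ≠ j) (t m : ℕ) : (houghtonGen n j hj ^ t) (i, m) = (i, m) := by
  induction t with
  | zero => simp
  | succ t ih =>
    rw [pow_succ, Equiv.Perm.mul_apply, hg_apply_other hj hi0 hij, ih]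

theorem hg_pow_self {n : ℕ} [NeZero n] {j : Fin n} (hj : j ≠ 0) (t m : ℕ) :
    (houghtonGen n j hj ^ t) (j, m + t) = (j, m) := by
  induction t with
  | zero => simp
  | succ t ih =>
    rw [pow_succ, Equiv.Perm.mul_apply, show m + (t + 1) = (m + t) + 1 from rfl,
      hg_apply_self hj, ih]


/-- (Houghton groups, `n ≥ 3`, rays indexed by `Fin n` with ray `0` the distinguished
ray and `c : Fin n → ℕ` positive.) If `[g_i^{c_i}, g_j^{c_j}] ∈ Alt(X_n)` for all
`i, j ≠ 0`, then every finitary permutation in `⟨g_i^{c_i} : i ≠ 0⟩` is even, i.e.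
`⟨g_i^{c_i} : i ≠ 0⟩ ∩ FSym(X_n) ≤ Alt(X_n)`. -/
theorem finitary_in_closure_even (n : ℕ) [NeZero n] (hn : 3 ≤ n) (c : Fin n → ℕ)
    (hc : ∀ i, 0 < c i)
    (hcomm : ∀ (i j : Fin n) (hi : i ≠ 0) (hj : j ≠ 0),
      (houghtonGen n i hi ^ c i)⁻¹ * (houghtonGen n j hj ^ c j)⁻¹ *
          houghtonGen n i hi ^ c i * houghtonGen n j hj ^ c j ∈ AltGroup (Fin n × ℕ)) :
    ∀ h ∈ Subgroup.closure {x : Equiv.Perm (Fin n × ℕ) |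
        ∃ (i : Fin n) (hi : i ≠ 0), x = houghtonGen n i hi ^ c i},
      {p : Fin n × ℕ | h p ≠ p}.Finite → h ∈ AltGroup (Fin n × ℕ) := by
  haveI : (AltGroup (Fin n × ℕ)).Normal := altGroup_normal _
  set f : Equiv.Perm (Fin n × ℕ) →* (Equiv.Perm (Fin n × ℕ) ⧸ AltGroup (Fin n × ℕ)) :=
    QuotientGroup.mk' (AltGroup (Fin n × ℕ)) with hf
  set s : Fin n → Equiv.Perm (Fin n × ℕ) :=
    fun i => if h : i = 0 then 1 else houghtonGen n i h ^ c i with hs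
  have hscomm : ∀ i j, Commute (f (s i)) (f (s j)) := by
    intro i j
    by_cases hi : i = 0
    · simp [hs, hi]
    by_cases hj : j = 0
    · simp [hs, hj]
    have h1 : f ((houghtonGen n i hi ^ c i)⁻¹ * (houghtonGen n j hj ^ c j)⁻¹ *
        houghtonGen n i hi ^ c i * houghtonGen n j hj ^ c j) = 1 :=
      (QuotientGroup.eq_one_iff _).mpr (hcomm i j hi hj)
    simp only [map_mul, map_inv] at h1
    simp only [hs, dif_neg hi, dif_neg hj]
    set A := f (houghtonGen n i hi ^ c i)
    set B := f (houghtonGen n j hj ^ c j)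
    have h2 := congrArg (fun z => B * (A * z)) h1
    simp only [mul_one, ← mul_assoc] at h2
    show A * B = B * A
    calc A * B = B * (A * (A⁻¹ * B⁻¹ * A * B)) := by group
    _ = B * A := by rw [h1, mul_one]
  set φ : ∀ _ : Fin n, Multiplicative ℤ →* (Equiv.Perm (Fin n × ℕ) ⧸ AltGroup (Fin n × ℕ)) :=
    fun i => zpowersHom _ (f (s i)) with hφ
  have hpair : Pairwise fun i j => ∀ x y, Commute (φ i x) (φ j y) := by
    intro i j _
    intro x y
    exact (hscomm i j).zpow_zpow _ _
  set ψ := MonoidHom.noncommPiCoprod φ hpair with hψ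
  set S := {x : Equiv.Perm (Fin n × ℕ) | ∃ (i : Fin n) (hi : i ≠ 0), x = houghtonGen n i hi ^ c i}
    with hS
  intro h hmem hfin
  have key : ∃ a : Fin n → ℤ, f h = ψ (fun i => Multiplicative.ofAdd (a i)) ∧
      ∀ (i : Fin n), i ≠ 0 → ∃ M : ℕ, ∀ m : ℕ, M ≤ m →
        ∃ m' : ℕ, (m' : ℤ) = (m : ℤ) - a i * c i ∧ h (i, m) = (i, m') := by
    clear hfin
    induction hmem using Subgroup.closure_induction with
    | mem x hx =>
      obtain ⟨j, hj, rfl⟩ := hx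
      refine ⟨fun i => if i = j then 1 else 0, ?_, ?_⟩
      · have hb : (fun i => Multiplicative.ofAdd (if i = j then (1:ℤ) else 0)) =
            Pi.mulSingle j (Multiplicative.ofAdd (1:ℤ)) := by
          funext i
          by_cases hij : i = j
          · subst hij; simp
          · simp [Pi.mulSingle_apply, hij]
        rw [hb, MonoidHom.noncommPiCoprod_mulSingle]
        simp [hφ, hs, dif_neg hj]
      · intro i hi
        by_cases hij : i = j
        · subst hij
          refine ⟨c i, fun m hm => ⟨m - c i, ?_, ?_⟩⟩
          · rw [Nat.cast_sub hm]; simp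
          · conv_lhs => rw [show m = (m - c i) + c i from (Nat.sub_add_cancel hm).symm]
            exact hg_pow_self hi _ _
        · exact ⟨0, fun m _ => ⟨m, by simp [hij], hg_pow_other hj hi hij _ _⟩⟩
    | one =>
      refine ⟨0, ?_, fun i hi => ⟨0, fun m _ => ⟨m, by simp, rfl⟩⟩⟩
      have : (fun i : Fin n => Multiplicative.ofAdd ((0:Fin n → ℤ) i)) = 1 := by
        funext i; simp
      rw [this, map_one, map_one]
    | mul x y hx hy ihx ihy =>
      obtain ⟨a, hfa, hta⟩ := ihx
      obtain ⟨b, hfb, htb⟩ := ihy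
      refine ⟨a + b, ?_, ?_⟩
      · have : (fun i => Multiplicative.ofAdd ((a + b) i)) =
            (fun i => Multiplicative.ofAdd (a i)) * (fun i => Multiplicative.ofAdd (b i)) := by
          funext i; simp [Pi.add_apply, ofAdd_add]
        rw [map_mul, hfa, hfb, this, map_mul]
      · intro i hi
        obtain ⟨Ma, hMa⟩ := hta i hi
        obtain ⟨Mb, hMb⟩ := htb i hi
        refine ⟨max Mb (Ma + (b i * c i).toNat), fun m hm => ?_⟩
        obtain ⟨m1, hc1, ha1⟩ := hMb m (le_trans (le_max_left _ _) hm)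
        have hm1 : Ma ≤ m1 := by
          have h3 : (b i * (c i : ℤ)) ≤ ((b i * c i).toNat : ℤ) := Int.self_le_toNat _
          have h4 : ((Ma + (b i * c i).toNat : ℕ) : ℤ) ≤ (m : ℤ) := by
            exact_mod_cast le_trans (le_max_right _ _) hm
          push_cast at h4
          have : (Ma : ℤ) ≤ (m1 : ℤ) := by rw [hc1]; linarith
          exact_mod_cast this
        obtain ⟨m2, hc2, ha2⟩ := hMa m1 hm1
        refine ⟨m2, ?_, ?_⟩
        · rw [hc2, hc1, Pi.add_apply]; ring
        · rw [Equiv.Perm.mul_apply, ha1, ha2]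
    | inv x hx ihx =>
      obtain ⟨a, hfa, hta⟩ := ihx
      refine ⟨-a, ?_, ?_⟩
      · have : (fun i => Multiplicative.ofAdd ((-a) i)) =
            (fun i => Multiplicative.ofAdd (a i))⁻¹ := by
          funext i; simp [Pi.neg_apply, ofAdd_neg]
        rw [map_inv, hfa, this, map_inv]
      · intro i hi
        obtain ⟨M, hM⟩ := hta i hi
        refine ⟨M + (-(a i * c i)).toNat, fun m hm => ?_⟩
        have h5 : (-(a i * (c i : ℤ))) ≤ ((-(a i * c i)).toNat : ℤ) := Int.self_le_toNat _
        have h6 : ((M + (-(a i * c i)).toNat : ℕ) : ℤ) ≤ (m : ℤ) := by exact_mod_cast hm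
        push_cast at h6
        have hnn : (0:ℤ) ≤ (m : ℤ) + a i * c i := by linarith
        set m'' := ((m : ℤ) + a i * c i).toNat with hm''
        have hcast : (m'' : ℤ) = (m : ℤ) + a i * c i := Int.toNat_of_nonneg hnn
        have hMm : M ≤ m'' := by
          have : (M : ℤ) ≤ (m'' : ℤ) := by rw [hcast]; linarith
          exact_mod_cast this
        obtain ⟨m2, hc2, ha2⟩ := hM m'' hMm
        have hm2 : m2 = m := by
          have : (m2 : ℤ) = (m : ℤ) := by rw [hc2, hcast]; ring
          exact_mod_cast this
        subst hm2
        refine ⟨m'', by rw [hcast, Pi.neg_apply]; ring, ?_⟩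
        rw [← ha2, Equiv.Perm.coe_inv, Equiv.symm_apply_apply]
  obtain ⟨a, hfa, htrans⟩ := key
  have ha0 : ∀ i, i ≠ 0 → a i = 0 := by
    intro i hi
    obtain ⟨M, hM⟩ := htrans i hi
    have hTfin : {m : ℕ | h (i, m) ≠ (i, m)}.Finite := by
      have : {m : ℕ | h (i, m) ≠ (i, m)} ⊆ (fun m : ℕ => ((i, m) : Fin n × ℕ)) ⁻¹'
          {p : Fin n × ℕ | h p ≠ p} := fun m hm => hm
      exact (hfin.preimage (fun m₁ _ m₂ _ e => (Prod.mk.injEq _ _ _ _ ▸ e).2)).subset this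
    obtain ⟨m, hm⟩ := ((hTfin.union (Set.finite_Iio M)).infinite_compl).nonempty
    simp only [Set.mem_compl_iff, Set.mem_union, Set.mem_setOf_eq, Set.mem_Iio, not_or, not_not,
      not_lt] at hm
    obtain ⟨m', hcast, happ⟩ := hM m hm.2
    rw [hm.1] at happ
    have hmm : m = m' := (Prod.ext_iff.mp happ).2
    subst hmm
    have : a i * (c i : ℤ) = 0 := by linarith
    rcases mul_eq_zero.mp this with h7 | h7
    · exact h7
    · exact absurd h7 (Int.natCast_ne_zero.mpr (hc i).ne')
  have hb : (fun i => Multiplicative.ofAdd (a i)) =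
      Pi.mulSingle (0 : Fin n) (Multiplicative.ofAdd (a 0)) := by
    funext i
    by_cases hi : i = 0
    · subst hi; simp
    · rw [ha0 i hi]
      simp [Pi.mulSingle_apply, hi]
  rw [hb, MonoidHom.noncommPiCoprod_mulSingle] at hfa
  have : f h = 1 := by
    rw [hfa]
    simp [hφ, hs]
  exact (QuotientGroup.eq_one_iff h).mp this
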